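/- Let k₀ ≥ 3 and μ ≥ 1. Let K₀ ∈ ℝ^{μ×μ} be symmetric invertible, and let Q₁ = I_μ, Q₂, …, Q_{k₀} ∈ ℝ^{μ×μ} be pairwise commuting matrices satisfying Q_i K₀ = K₀ Q_iᵀ for all i. Let Λ ∈ ℝ^{μ×μ}, W ∈ ℝ^{μ×k₀}, and for each pair 1 ≤ i < k ≤ k₀ let ρ_{ik} ∈ ℝ^{1×μ} and P_{ik} ∈ ℝ^{1×k₀}. For α ∈ ℝ^{1×μ}, antisymmetric Y = (y_{ik}) ∈ ℝ^{k₀×k₀} and z ∈ ℝ^{1×k₀}, define the (2k₀+μ+1)×(2k₀+μ+1) matrix X_e(α,Y,z) with block rows (of sizes k₀, μ, k₀, 1): [[0, A, Y, zᵀ],[0, 0, −K₀Aᵀ, βᵀ],[0, 0, 0, γᵀ],[0, 0, 0, 0]], where A ∈ ℝ^{k₀×μ} has i-th row αQ_i, β = αΛ + Σ_{i<k} y_{ik} ρ_{ik}, and γ = αW + Σ_{i<k} y_{ik} P_{ik}. If all the matrices X_e(α,Y,z) pairwise commute, then W = 0, ρ_{ik} = 0 and P_{ik} = 0 for all i < k,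 Λ = Λᵀ, and Q_j Λ K₀^{−1} = Λ K₀^{−1} Q_j for all j = 1,…,k₀. -/
import Mathlib


open Matrix

/-- Index type with blocks of sizes `k₀, μ, k₀, 1`. -/
abbrev Idx3 (k₀ μ : ℕ) := (Fin k₀ ⊕ Fin μ) ⊕ (Fin k₀ ⊕ Unit)

/-- The matrix `X_e(α, Y, z)` with block rows (sizes `k₀, μ, k₀, 1`)
`[[0, A, Y, zᵀ], [0, 0, -K₀Aᵀ, βᵀ], [0, 0, 0, γᵀ], [0, 0, 0, 0]]`, where the `i`-th
row of `A` is `α Qᵢ`, `β = αΛ + Σ_{i<k} y_{ik} ρ_{ik}` and `γ = αW + Σ_{i<k} y_{ik} P_{ik}`. -/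
def Xe3 (k₀ μ : ℕ) (K₀ : Matrix (Fin μ) (Fin μ) ℝ)
    (Q : Fin k₀ → Matrix (Fin μ) (Fin μ) ℝ)
    (Λ : Matrix (Fin μ) (Fin μ) ℝ) (W : Matrix (Fin μ) (Fin k₀) ℝ)
    (ρ : Fin k₀ → Fin k₀ → Fin μ → ℝ) (P : Fin k₀ → Fin k₀ → Fin k₀ → ℝ)
    (α : Fin μ → ℝ) (Y : Matrix (Fin k₀) (Fin k₀) ℝ) (z : Fin k₀ → ℝ) :
    Matrix (Idx3 k₀ μ) (Idx3 k₀ μ) ℝ :=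
  let A : Matrix (Fin k₀) (Fin μ) ℝ := Matrix.of fun i j => ∑ l, α l * Q i l j
  let β : Fin μ → ℝ := fun j => (∑ l, α l * Λ l j) +
    ∑ i : Fin k₀, ∑ k : Fin k₀, if i < k then Y i k * ρ i k j else 0
  let γ : Fin k₀ → ℝ := fun j => (∑ l, α l * W l j) +
    ∑ i : Fin k₀, ∑ k : Fin k₀, if i < k then Y i k * P i k j else 0
  Matrix.fromBlocks
    (Matrix.fromBlocks 0 A 0 0)
    (Matrix.fromBlocks Y (Matrix.of fun i _ => z i)
      (-(K₀ * Aᵀ)) (Matrix.of fun i _ => β i))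
    0
    (Matrix.fromBlocks 0 (Matrix.of fun i _ => γ i) 0 0)
def Easym (k₀ : ℕ) (a b : Fin k₀) : Matrix (Fin k₀) (Fin k₀) ℝ :=
  Matrix.of fun i j => (if i = a ∧ j = b then (1:ℝ) else 0) - (if i = b ∧ j = a then 1 else 0)

lemma Easym_anti (k₀ : ℕ) (a b : Fin k₀) : (Easym k₀ a b)ᵀ = -Easym k₀ a b := by
  ext i j
  simp only [Easym, Matrix.transpose_apply, Matrix.neg_apply, Matrix.of_apply]
  rw [if_congr (show (j = a ∧ i = b) ↔ (i = b ∧ j = a) from and_comm) rfl rfl,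
      if_congr (show (j = b ∧ i = a) ↔ (i = a ∧ j = b) from and_comm) rfl rfl]
  ring

lemma sum_lt_Easym (k₀ : ℕ) (a b : Fin k₀) (hab : a < b) (f : Fin k₀ → Fin k₀ → ℝ) :
    (∑ p : Fin k₀, ∑ q : Fin k₀, if p < q then Easym k₀ a b p q * f p q else 0) = f a b := by
  have h : ∀ p q : Fin k₀, (if p < q then Easym k₀ a b p q * f p q else 0)
      = if p = a ∧ q = b then f p q else 0 := by
    intro p q
    by_cases h1 : p = a ∧ q = b
    · obtain ⟨rfl, rfl⟩ := h1
      have : ¬(p = q ∧ q = p) := by rintro ⟨rfl, -⟩; exact absurd hab (lt_irrefl _)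
      simp [Easym, hab, this]
    · by_cases h2 : p < q
      · have hba : ¬(p = b ∧ q = a) := by
          rintro ⟨rfl, rfl⟩; exact absurd hab (by omega)
        simp [Easym, h1, hba, h2]
      · simp [h1, h2]
  simp_rw [h, ite_and]
  simp

lemma sum_Easym_mul (k₀ : ℕ) (a b : Fin k₀) (hab : a ≠ b) (i : Fin k₀) (g : Fin k₀ → ℝ) :
    (∑ k : Fin k₀, Easym k₀ a b i k * g k)
      = (if i = a then g b else 0) - (if i = b then g a else 0) := by
  have h : ∀ k : Fin k₀, Easym k₀ a b i k * g k
      = (if i = a then (if k = b then g k else 0) else 0)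
        - (if i = b then (if k = a then g k else 0) else 0) := by
    intro k
    by_cases h1 : i = a <;> by_cases h2 : i = b <;>
      simp_all [Easym, ite_and, sub_mul]
  simp_rw [h]
  rw [Finset.sum_sub_distrib]
  by_cases h1 : i = a <;> by_cases h2 : i = b <;> simp_all

lemma sum_single_mul (μ : ℕ) (p : Fin μ) (g : Fin μ → ℝ) :
    (∑ l : Fin μ, (Pi.single p (1:ℝ) : Fin μ → ℝ) l * g l) = g p := by
  simp [Pi.single_apply, ite_mul]
/-- If all the matrices `X_e(α, Y, z)` (with `Y` antisymmetric) pairwise commute,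
then `W = 0`, all `ρ_{ik}` and `P_{ik}` (`i < k`) vanish, `Λ` is symmetric, and
each `Q_j` commutes with `Λ K₀⁻¹`. -/
theorem stmt3 (k₀ μ : ℕ) (hk₀ : 3 ≤ k₀) (hμ : 1 ≤ μ)
    (K₀ : Matrix (Fin μ) (Fin μ) ℝ) (hs : K₀ᵀ = K₀) (hi : IsUnit K₀)
    (Q : Fin k₀ → Matrix (Fin μ) (Fin μ) ℝ)
    (hQ1 : Q ⟨0, by omega⟩ = 1)
    (hQcomm : ∀ i j, Q i * Q j = Q j * Q i)
    (hQK : ∀ i, Q i * K₀ = K₀ * (Q i)ᵀ)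
    (Λ : Matrix (Fin μ) (Fin μ) ℝ) (W : Matrix (Fin μ) (Fin k₀) ℝ)
    (ρ : Fin k₀ → Fin k₀ → Fin μ → ℝ) (P : Fin k₀ → Fin k₀ → Fin k₀ → ℝ)
    (hcomm : ∀ (α α' : Fin μ → ℝ) (Y Y' : Matrix (Fin k₀) (Fin k₀) ℝ)
      (z z' : Fin k₀ → ℝ), Yᵀ = -Y → Y'ᵀ = -Y' →
      Xe3 k₀ μ K₀ Q Λ W ρ P α Y z * Xe3 k₀ μ K₀ Q Λ W ρ P α' Y' z' =
        Xe3 k₀ μ K₀ Q Λ W ρ P α' Y' z' * Xe3 k₀ μ K₀ Q Λ W ρ P α Y z) :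
    W = 0 ∧
    (∀ i k : Fin k₀, i < k → ρ i k = 0 ∧ P i k = 0) ∧
    Λᵀ = Λ ∧
    (∀ j, Q j * (Λ * K₀⁻¹) = (Λ * K₀⁻¹) * Q j) := by

  have hk : ∀ n, n < 3 → n < k₀ := by omega
  set i0 : Fin k₀ := ⟨0, hk 0 (by norm_num)⟩ with hi0
  have key : ∀ (α α' : Fin μ → ℝ) (Y Y' : Matrix (Fin k₀) (Fin k₀) ℝ),
      Yᵀ = -Y → Y'ᵀ = -Y' → ∀ i : Fin k₀,
      (∑ x : Fin μ, (∑ l : Fin μ, α l * Q i l x) *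
          ((∑ l : Fin μ, α' l * Λ l x) +
            ∑ p : Fin k₀, ∑ q : Fin k₀, if p < q then Y' p q * ρ p q x else 0) +
        ∑ x : Fin k₀, Y i x * ((∑ l : Fin μ, α' l * W l x) +
            ∑ p : Fin k₀, ∑ q : Fin k₀, if p < q then Y' p q * P p q x else 0)) =
      (∑ x : Fin μ, (∑ l : Fin μ, α' l * Q i l x) *
          ((∑ l : Fin μ, α l * Λ l x) +
            ∑ p : Fin k₀, ∑ q : Fin k₀, if p < q then Y p q * ρ p q x else 0) +
        ∑ x : Fin k₀, Y' i x * ((∑ l : Fin μ, α l * W l x) +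
            ∑ p : Fin k₀, ∑ q : Fin k₀, if p < q then Y p q * P p q x else 0)) := by
    intro α α' Y Y' hY hY' i
    have h := hcomm α α' Y Y' 0 0 hY hY'
    have h2 := congrFun (congrFun h (Sum.inl (Sum.inl i))) (Sum.inr (Sum.inr ()))
    simpa [Xe3, Matrix.mul_apply, Fintype.sum_sum_type] using h2
  -- pure α-α specialization
  have keyAA : ∀ (p q : Fin μ) (i : Fin k₀),
      (∑ x : Fin μ, Q i p x * Λ q x) = ∑ x : Fin μ, Q i q x * Λ p x := by
    intro p q i
    have h := key (Pi.single p 1) (Pi.single q 1) 0 0 (by simp) (by simp) i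
    simpa [sum_single_mul] using h
  -- mixed α-Y' specialization
  have keyAY : ∀ (c d : Fin k₀), c < d → ∀ (p : Fin μ) (i : Fin k₀),
      (∑ x : Fin μ, Q i p x * ρ c d x) =
        (if i = c then W p d else 0) - (if i = d then W p c else 0) := by
    intro c d hcd p i
    have h := key (Pi.single p 1) 0 0 (Easym k₀ c d) (by simp) (Easym_anti k₀ c d) i
    simp only [sum_single_mul, Pi.zero_apply, Matrix.zero_apply, zero_mul, mul_zero,
      Finset.sum_const_zero, add_zero, zero_add, ite_self] at h
    simp_rw [sum_lt_Easym k₀ c d hcd, sum_Easym_mul k₀ c d (ne_of_lt hcd)] at h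
    exact h
  -- pure Y-Y' specialization
  have keyYY : ∀ (a b c d : Fin k₀), a < b → c < d → ∀ i : Fin k₀,
      ((if i = a then P c d b else 0) - (if i = b then P c d a else 0)) =
      ((if i = c then P a b d else 0) - (if i = d then P a b c else 0)) := by
    intro a b c d hab hcd i
    have h := key 0 0 (Easym k₀ a b) (Easym k₀ c d)
      (Easym_anti k₀ a b) (Easym_anti k₀ c d) i
    simp only [Pi.zero_apply, Matrix.zero_apply, zero_mul, mul_zero,
      Finset.sum_const_zero, add_zero, zero_add, ite_self] at h
    simp_rw [sum_Easym_mul k₀ a b (ne_of_lt hab), sum_Easym_mul k₀ c d (ne_of_lt hcd),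
      sum_lt_Easym k₀ a b hab, sum_lt_Easym k₀ c d hcd] at h
    exact h
  -- basic facts
  have hbne0 : ∀ a b : Fin k₀, a < b → b ≠ i0 := by
    intro a b hab hb
    have h2 : a.val < b.val := hab
    rw [hb] at h2
    have h3 : i0.val = 0 := rfl
    omega
  -- Λ is symmetric
  have hΛ : Λᵀ = Λ := by
    ext p q
    have h := keyAA p q i0
    simp only [hQ1, Matrix.one_apply, ite_mul, one_mul, zero_mul] at h
    simpa using h
  have hΛs : ∀ x y : Fin μ, Λ x y = Λ y x := by
    intro x y
    exact (congrFun (congrFun hΛ x) y).symm.trans (Matrix.transpose_apply Λ x y)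
  -- ρ for pairs not containing the zero index
  have hrho_of : ∀ a b : Fin k₀, a < b → a ≠ i0 → ρ a b = 0 := by
    intro a b hab ha
    funext p
    have h := keyAY a b hab p i0
    simpa [hQ1, Matrix.one_apply, ite_mul, Ne.symm ha,
      Ne.symm (hbne0 a b hab)] using h
  -- W vanishes on nonzero columns
  have hWne : ∀ c : Fin k₀, c ≠ i0 → ∀ p, W p c = 0 := by
    intro c hc p
    have pick : ∃ m : Fin k₀, m ≠ i0 ∧ m ≠ c := by
      rcases eq_or_ne c ⟨1, hk 1 (by norm_num)⟩ with hc1 | hc1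
      · refine ⟨⟨2, hk 2 (by norm_num)⟩, ?_, ?_⟩
        · simp [hi0, Fin.ext_iff]
        · rw [hc1]; simp [Fin.ext_iff]
      · exact ⟨⟨1, hk 1 (by norm_num)⟩, by simp [hi0, Fin.ext_iff], Ne.symm hc1⟩
    obtain ⟨m, hm0, hmc⟩ := pick
    rcases lt_or_gt_of_ne hmc with hlt | hgt
    · have hr := hrho_of m c hlt hm0
      have h := keyAY m c hlt p m
      rw [hr] at h
      simpa [hmc] using h.symm
    · have hr := hrho_of c m hgt hc
      have h := keyAY c m hgt p m
      rw [hr] at h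
      simp [hmc] at h
      linarith
  -- W = 0
  have hW : W = 0 := by
    ext p c
    by_cases hc : c = i0
    · subst hc
      have hb1lt : i0 < (⟨1, hk 1 (by norm_num)⟩ : Fin k₀) := by
        simp [Fin.lt_def, hi0]
      have hb1ne : (⟨1, hk 1 (by norm_num)⟩ : Fin k₀) ≠ i0 := hbne0 _ _ hb1lt
      have hr : ρ i0 ⟨1, hk 1 (by norm_num)⟩ = 0 := by
        funext p'
        have h := keyAY i0 ⟨1, hk 1 (by norm_num)⟩ hb1lt p' i0
        simpa [hQ1, Matrix.one_apply, ite_mul, Ne.symm hb1ne,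
          hWne _ hb1ne p'] using h
      have h := keyAY i0 ⟨1, hk 1 (by norm_num)⟩ hb1lt p ⟨1, hk 1 (by norm_num)⟩
      rw [hr] at h
      simp [hb1ne] at h
      simpa using h
    · simpa using hWne c hc p
  -- all ρ vanish
  have hρ0 : ∀ a b : Fin k₀, a < b → ρ a b = 0 := by
    intro a b hab
    funext p
    have h := keyAY a b hab p i0
    simpa [hQ1, Matrix.one_apply, ite_mul, hW] using h
  -- all P vanish
  have hP0 : ∀ a b : Fin k₀, a < b → P a b = 0 := by
    intro a b hab
    funext y
    show P a b y = 0
    by_cases hx : ∃ x : Fin k₀, x ≠ a ∧ x ≠ b ∧ x ≠ y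
    · obtain ⟨x, hxa, hxb, hxy⟩ := hx
      rcases lt_or_gt_of_ne hxy with hlt | hgt
      · have h := keyYY a b x y hab hlt x
        simpa [hxa, hxb, ne_of_lt hlt] using h.symm
      · have h := keyYY a b y x hab hgt x
        simp [hxa, hxb, ne_of_gt hgt, Ne.symm hxy] at h
        linarith
    · push_neg at hx
      have hcover : (y = a ∨ y = b) → ∀ x : Fin k₀, x = a ∨ x = b := by
        intro hy x
        by_cases h0 : x = a
        · exact Or.inl h0
        by_cases h2 : x = b
        · exact Or.inr h2
        have h3 := hx x h0 h2
        rcases hy with rfl | rfl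
        · exact absurd h3 h0
        · exact absurd h3 h2
      by_cases hya : y = a
      · exfalso
        have hall := hcover (Or.inl hya)
        have e0 := hall ⟨0, hk 0 (by norm_num)⟩
        have e1 := hall ⟨1, hk 1 (by norm_num)⟩
        have e2 := hall ⟨2, hk 2 (by norm_num)⟩
        rcases e0 with h0 | h0 <;> rcases e1 with h1 | h1 <;> rcases e2 with h2 | h2 <;>
          simp [Fin.ext_iff] at h0 h1 h2 <;> omega
      by_cases hyb : y = b
      · exfalso
        have hall := hcover (Or.inr hyb)
        have e0 := hall ⟨0, hk 0 (by norm_num)⟩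
        have e1 := hall ⟨1, hk 1 (by norm_num)⟩
        have e2 := hall ⟨2, hk 2 (by norm_num)⟩
        rcases e0 with h0 | h0 <;> rcases e1 with h1 | h1 <;> rcases e2 with h2 | h2 <;>
          simp [Fin.ext_iff] at h0 h1 h2 <;> omega
      rcases lt_trichotomy y a with h1 | h1 | h1
      · -- y < a < b
        have k1 := keyYY y a a b h1 hab a
        have k2 := keyYY y b a b (h1.trans hab) hab b
        have k3 := keyYY y a y b h1 (h1.trans hab) y
        simp [ne_of_gt h1, ne_of_lt hab, Ne.symm hya, Ne.symm hyb, hya, hyb,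
          ne_of_gt (h1.trans hab), ne_of_gt hab] at k1 k2 k3
        linarith
      · exact absurd h1 hya
      · rcases lt_trichotomy y b with h2 | h2 | h2
        · -- a < y < b
          have k1 := keyYY a b a y hab h1 a
          have k2 := keyYY a b y b hab h2 b
          have k3 := keyYY a y y b h1 h2 y
          simp [ne_of_lt hab, ne_of_lt h1, ne_of_gt h2, hya, hyb,
            Ne.symm hya, Ne.symm hyb, ne_of_gt hab] at k1 k2 k3
          linarith
        · exact absurd h2 hyb
        · -- a < b < y
          have k1 := keyYY a b a y hab (hab.trans h2) a
          have k2 := keyYY a b b y hab h2 b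
          have k3 := keyYY a y b y (hab.trans h2) h2 y
          simp [ne_of_lt hab, ne_of_lt h2, ne_of_lt (hab.trans h2), hya, hyb,
            Ne.symm hya, Ne.symm hyb, ne_of_gt hab, ne_of_gt h2,
            ne_of_gt (hab.trans h2)] at k1 k2 k3
          linarith
  -- commutation with Λ K₀⁻¹
  have hdet : IsUnit K₀.det := (Matrix.isUnit_iff_isUnit_det K₀).mp hi
  have hKK : K₀ * K₀⁻¹ = 1 := Matrix.mul_nonsing_inv _ hdet
  have hKK' : K₀⁻¹ * K₀ = 1 := Matrix.nonsing_inv_mul _ hdet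
  have hQKinv : ∀ j, (Q j)ᵀ * K₀⁻¹ = K₀⁻¹ * Q j := by
    intro j
    calc (Q j)ᵀ * K₀⁻¹ = (K₀⁻¹ * K₀) * ((Q j)ᵀ * K₀⁻¹) := by rw [hKK', one_mul]
      _ = K₀⁻¹ * (K₀ * (Q j)ᵀ) * K₀⁻¹ := by simp only [Matrix.mul_assoc]
      _ = K₀⁻¹ * (Q j * K₀) * K₀⁻¹ := by rw [hQK j]
      _ = K₀⁻¹ * Q j * (K₀ * K₀⁻¹) := by simp only [Matrix.mul_assoc]
      _ = K₀⁻¹ * Q j := by rw [hKK, Matrix.mul_one]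
  have hQΛ : ∀ j, Q j * Λ = Λ * (Q j)ᵀ := by
    intro j
    ext p q
    simp only [Matrix.mul_apply, Matrix.transpose_apply]
    calc ∑ x, Q j p x * Λ x q = ∑ x, Q j p x * Λ q x :=
          Finset.sum_congr rfl (fun x _ => by rw [hΛs x q])
      _ = ∑ x, Q j q x * Λ p x := keyAA p q j
      _ = ∑ x, Λ p x * Q j q x := Finset.sum_congr rfl (fun x _ => mul_comm _ _)
  refine ⟨hW, fun i k hik => ⟨hρ0 i k hik, hP0 i k hik⟩, hΛ, fun j => ?_⟩
  calc Q j * (Λ * K₀⁻¹) = (Q j * Λ) * K₀⁻¹ := by rw [Matrix.mul_assoc]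
    _ = Λ * ((Q j)ᵀ * K₀⁻¹) := by rw [hQΛ j, Matrix.mul_assoc]
    _ = Λ * (K₀⁻¹ * Q j) := by rw [hQKinv j]
    _ = (Λ * K₀⁻¹) * Q j := by rw [← Matrix.mul_assoc]
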